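/- Let A be a small preadditive category and let t = (T,F) be a hereditary torsion pair in Mod A. Then t is of finite type (i.e. F is closed under direct limits) if and only if there is a set S of finitely presented right A-modules such that F = S^⊥ = {X : Hom(S,X) = 0 for all S ∈ S}. -/

import Mathlib

open CategoryTheory CategoryTheory.Limits Opposite
noncomputable section
universe u
variable (A : Type u) [SmallCategory A] [Preadditive A]

abbrev PMod := Aᵒᵖ ⥤ AddCommGrpCat.{u}

def Hrep (b : A) : PMod A where
  obj a := AddCommGrpCat.of (unop a ⟶ b)
  map f := AddCommGrpCat.ofHom (AddMonoidHom.mk' (fun g => f.unop ≫ g)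
    (fun g h => Preadditive.comp_add _ _ _ _ _ _))
  map_id a := by ext g; simp
  map_comp f g := by
    ext h
    show (f ≫ g).unop ≫ h = g.unop ≫ f.unop ≫ h
    simp

def toH {a b : A} (γ : a ⟶ b) : ((Hrep A b).obj (op a)) := γ

def Hmap {b b' : A} (r : b ⟶ b') : Hrep A b ⟶ Hrep A b' where
  app a := AddCommGrpCat.ofHom (AddMonoidHom.mk' (fun g => g ≫ r)
    (fun g h => Preadditive.add_comp _ _ _ _ _ _))
  naturality a a' f := by
    ext g
    show (f.unop ≫ g) ≫ r = f.unop ≫ g ≫ r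
    exact Category.assoc _ _ _

def inSub {M : PMod A} (R : Subobject M) {a : A} (x : M.obj (op a)) : Prop :=
  ∃ y, R.arrow.app (op a) y = x


def IsTorsionPair (T F : Set (PMod A)) : Prop :=
  T = {X | X.Additive ∧ ∀ Y ∈ F, ∀ f : X ⟶ Y, f = 0} ∧
  F = {X | X.Additive ∧ ∀ Y ∈ T, ∀ f : Y ⟶ X, f = 0} ∧
  ∀ X : PMod A, X.Additive →
    ∃ (Z : PMod A) (p : X ⟶ Z), Z ∈ F ∧ Epi p ∧ kernel p ∈ T

/-- The torsion-free class is closed under direct limits. -/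
def ClosedUnderDirectLimits (F : Set (PMod A)) : Prop :=
  ∀ (J : Type u) [SmallCategory J] [IsFiltered J] (D : J ⥤ PMod A),
    (∀ j, D.obj j ∈ F) → colimit D ∈ F

/-- `M` is finitely presented: `Hom_A(M, -)` commutes with direct limits of modules. -/
def FinPresented (M : PMod A) : Prop :=
  M.Additive ∧
  ∀ (J : Type u) [SmallCategory J] [IsFiltered J] (D : J ⥤ PMod A),
    (∀ j, (D.obj j).Additive) →
    Nonempty (IsColimit ((coyoneda.obj (op M)).mapCocone (colimit.cocone D)))


set_option linter.unusedSectionVars false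
section Basics
variable {A}

lemma comp_app_elt {X Y Z : PMod A} (f : X ⟶ Y) (g : Y ⟶ Z) (c : Aᵒᵖ) (x : X.obj c) :
    (f ≫ g).app c x = g.app c (f.app c x) := rfl

lemma hom_app_hrep {a : A} {X : PMod A} (η : Hrep A a ⟶ X) {c : A} (g : c ⟶ a) :
    η.app (op c) g = X.map g.op (η.app (op a) (𝟙 a)) := by
  have h2 := congrArg (fun (φ : (Hrep A a).obj (op a) ⟶ X.obj (op c)) => φ (𝟙 a))
    (η.naturality g.op)
  have h3 : (Hrep A a).map g.op (𝟙 a) = g := by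
    show g.op.unop ≫ 𝟙 a = g; simp
  have h4 : ((Hrep A a).map g.op ≫ η.app (op c)) (𝟙 a) = η.app (op c) g := by
    show η.app (op c) ((Hrep A a).map g.op (𝟙 a)) = _
    rw [h3]
  have h5 : (η.app (op a) ≫ X.map g.op) (𝟙 a) = X.map g.op (η.app (op a) (𝟙 a)) := rfl
  rw [← h4, ← h5]; exact h2

lemma hrep_hom_ext {a : A} {X : PMod A} {η θ : Hrep A a ⟶ X}
    (h : η.app (op a) (𝟙 a) = θ.app (op a) (𝟙 a)) : η = θ := by
  ext c g
  obtain ⟨c⟩ := c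
  rw [hom_app_hrep η g, hom_app_hrep θ g, h]

end Basics
set_option linter.unusedSectionVars false
section Elt
variable {A}

def eltHom {a : A} {X : PMod A} (hX : X.Additive) (x : X.obj (op a)) : Hrep A a ⟶ X where
  app c := AddCommGrpCat.ofHom (AddMonoidHom.mk' (fun (g : (unop c) ⟶ a) => X.map g.op x)
    (fun g g' => by
      show X.map (g + g').op x = X.map g.op x + X.map g'.op x
      have : (g + g').op = g.op + g'.op := rfl
      rw [this, hX.map_add]
      rfl))
  naturality c c' f := by
    ext (g : (unop c) ⟶ a)
    show X.map (f.unop ≫ g).op x = X.map f (X.map g.op x)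
    have : (f.unop ≫ g).op = g.op ≫ f := rfl
    rw [this, X.map_comp]
    rfl

@[simp] lemma eltHom_id {a : A} {X : PMod A} (hX : X.Additive) (x : X.obj (op a)) :
    (eltHom hX x).app (op a) (𝟙 a) = x := by
  show X.map (𝟙 a).op x = x
  have : (𝟙 a).op = 𝟙 (op a) := rfl
  rw [this, X.map_id]; rfl

lemma eltHom_app {a : A} {X : PMod A} (hX : X.Additive) (x : X.obj (op a)) {c : A} (g : c ⟶ a) :
    (eltHom hX x).app (op c) g = X.map g.op x := rfl

/-- joint surjectivity transfers additivity -/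
lemma additive_of_jointly_surjective {ι : Type*} {X : PMod A} (P : ι → PMod A)
    (hP : ∀ i, (P i).Additive) (q : ∀ i, P i ⟶ X)
    (hsurj : ∀ (c : Aᵒᵖ) (x : X.obj c), ∃ i y, (q i).app c y = x) : X.Additive := by
  constructor
  intro c c' f g
  ext x
  obtain ⟨i, y, rfl⟩ := hsurj c x
  have n1 := congrArg (fun (φ : (P i).obj c ⟶ X.obj c') => φ y) ((q i).naturality (f + g))
  have n2 := congrArg (fun (φ : (P i).obj c ⟶ X.obj c') => φ y) ((q i).naturality f)
  have n3 := congrArg (fun (φ : (P i).obj c ⟶ X.obj c') => φ y) ((q i).naturality g)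
  simp only at n1 n2 n3
  have e1 : ((P i).map (f + g) ≫ (q i).app c') y = ((q i).app c ≫ X.map (f + g)) y := by rw [n1]
  have e2 : ((P i).map f ≫ (q i).app c') y = ((q i).app c ≫ X.map f) y := by rw [n2]
  have e3 : ((P i).map g ≫ (q i).app c') y = ((q i).app c ≫ X.map g) y := by rw [n3]
  show X.map (f + g) ((q i).app c y) = X.map f ((q i).app c y) + X.map g ((q i).app c y)
  rw [show X.map (f+g) ((q i).app c y) = ((q i).app c ≫ X.map (f+g)) y from rfl, ← e1]
  rw [show X.map f ((q i).app c y) = ((q i).app c ≫ X.map f) y from rfl, ← e2]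
  rw [show X.map g ((q i).app c y) = ((q i).app c ≫ X.map g) y from rfl, ← e3]
  show (q i).app c' ((P i).map (f+g) y) = (q i).app c' ((P i).map f y) + (q i).app c' ((P i).map g y)
  rw [(hP i).map_add]
  show (q i).app c' ((P i).map f y + (P i).map g y) = _
  rw [map_add]

lemma hrep_additive (a : A) : (Hrep A a).Additive := by
  constructor
  intro c c' f g
  ext (h : (unop c) ⟶ a)
  show (f + g).unop ≫ h = (f.unop ≫ h) + (g.unop ≫ h)
  have : (f + g).unop = f.unop + g.unop := rfl
  rw [this, Preadditive.add_comp]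

end Elt
section ColimElt
variable {A}
variable {J : Type u} [SmallCategory J] [IsFiltered J] (D : J ⥤ PMod A)

lemma pmod_colim_exists_rep (c : Aᵒᵖ) (x : (colimit D).obj c) :
    ∃ (j : J) (y : (D.obj j).obj c), (colimit.ι D j).app c y = x := by
  let e := colimitObjIsoColimitCompEvaluation D c
  obtain ⟨j, y, hy⟩ := Concrete.colimit_exists_rep (D ⋙ (evaluation Aᵒᵖ AddCommGrpCat).obj c)
    (e.hom x)
  refine ⟨j, y, ?_⟩
  have h2 := congrArg (fun (φ : (D.obj j).obj c ⟶ (colimit D).obj c) => φ y)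
    (colimitObjIsoColimitCompEvaluation_ι_inv D j c)
  simp only at h2
  have : (colimit.ι D j).app c y =
      e.inv (colimit.ι (D ⋙ (evaluation Aᵒᵖ AddCommGrpCat).obj c) j y) := by
    rw [show e.inv (colimit.ι (D ⋙ (evaluation Aᵒᵖ AddCommGrpCat).obj c) j y)
      = (colimit.ι (D ⋙ (evaluation Aᵒᵖ AddCommGrpCat).obj c) j ≫ e.inv) y from rfl]
    exact h2.symm
  rw [this, hy]
  show (e.hom ≫ e.inv) x = x
  rw [e.hom_inv_id]; rfl

lemma pmod_colim_rep_eq {c : Aᵒᵖ} {i j : J} (x : (D.obj i).obj c) (y : (D.obj j).obj c)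
    (hxy : (colimit.ι D i).app c x = (colimit.ι D j).app c y) :
    ∃ (k : J) (f : i ⟶ k) (g : j ⟶ k), (D.map f).app c x = (D.map g).app c y := by
  let E := D ⋙ (evaluation Aᵒᵖ AddCommGrpCat).obj c
  let e := colimitObjIsoColimitCompEvaluation D c
  have key : ∀ (l : J) (z : (D.obj l).obj c),
      e.hom ((colimit.ι D l).app c z) = colimit.ι E l z := by
    intro l z
    have := congrArg (fun (φ : (D.obj l).obj c ⟶ colimit E) => φ z)
      (colimitObjIsoColimitCompEvaluation_ι_app_hom D l c)
    exact this
  have : colimit.ι E i x = colimit.ι E j y := by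
    rw [← key i x, ← key j y, hxy]
  exact Concrete.colimit_exists_of_rep_eq E x y this

lemma pmod_colim_rep_zero {c : Aᵒᵖ} {j : J} (y : (D.obj j).obj c)
    (hy : (colimit.ι D j).app c y = 0) :
    ∃ (k : J) (f : j ⟶ k), (D.map f).app c y = 0 := by
  have h0 : (colimit.ι D j).app c y = (colimit.ι D j).app c 0 := by
    rw [hy, map_zero]
  obtain ⟨k, f, g, hfg⟩ := pmod_colim_rep_eq D y 0 h0
  refine ⟨k, f, ?_⟩
  rw [hfg, map_zero]

lemma pmod_colim_additive (hD : ∀ j, (D.obj j).Additive) : (colimit D).Additive := by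
  refine additive_of_jointly_surjective (fun j => D.obj j) hD (fun j => colimit.ι D j) ?_
  intro c x
  obtain ⟨j, y, hy⟩ := pmod_colim_exists_rep D c x
  exact ⟨j, y, hy⟩

end ColimElt
section Fp
variable {A}
variable {J : Type u} [SmallCategory J] [IsFiltered J] (D : J ⥤ PMod A)

lemma pmod_colim_finset_zero {ι : Type*} (s : Finset ι) {j : J} (c : ι → Aᵒᵖ)
    (w : ∀ i, (D.obj j).obj (c i))
    (h : ∀ i ∈ s, (colimit.ι D j).app (c i) (w i) = 0) :
    ∃ (k : J) (f : j ⟶ k), ∀ i ∈ s, (D.map f).app (c i) (w i) = 0 := by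
  classical
  induction s using Finset.induction_on with
  | empty => exact ⟨j, 𝟙 j, fun i hi => absurd hi (Finset.notMem_empty i)⟩
  | @insert i₀ s hi₀ ih =>
    obtain ⟨k, f, hf⟩ := ih (fun i hi => h i (Finset.mem_insert_of_mem hi))
    have hw' : (colimit.ι D k).app (c i₀) ((D.map f).app (c i₀) (w i₀)) = 0 := by
      have hcw := congrArg (fun (φ : (D.obj j).obj (c i₀) ⟶ (colimit D).obj (c i₀)) =>
        φ (w i₀)) (congrArg (fun (ψ : D.obj j ⟶ colimit D) => ψ.app (c i₀)) (colimit.w D f))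
      simp only at hcw
      have : ((D.map f ≫ colimit.ι D k).app (c i₀)) (w i₀)
          = (colimit.ι D k).app (c i₀) ((D.map f).app (c i₀) (w i₀)) := rfl
      rw [← this, hcw]
      exact h i₀ (Finset.mem_insert_self i₀ s)
    obtain ⟨k', g, hg⟩ := pmod_colim_rep_zero D _ hw'
    refine ⟨k', f ≫ g, fun i hi => ?_⟩
    have hcomp : ∀ (z : (D.obj j).obj (c i)),
        (D.map (f ≫ g)).app (c i) z = (D.map g).app (c i) ((D.map f).app (c i) z) := by
      intro z; rw [D.map_comp]; rfl
    rcases Finset.mem_insert.mp hi with rfl | hi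
    · rw [hcomp]; exact hg
    · rw [hcomp, hf i hi, map_zero]

lemma hrep_finPresented (a : A) : FinPresented A (Hrep A a) := by
  refine ⟨hrep_additive a, ?_⟩
  intro J _ _ D hD
  have hcadd : (colimit D).Additive := pmod_colim_additive D hD
  constructor
  apply Types.FilteredColimit.isColimitOf
  · -- surjectivity
    intro (η : Hrep A a ⟶ colimit D)
    obtain ⟨j, y, hy⟩ := pmod_colim_exists_rep D (op a) (η.app (op a) (𝟙 a))
    refine ⟨j, eltHom (hD j) y, ?_⟩
    apply hrep_hom_ext
    show η.app (op a) (𝟙 a) = (eltHom (hD j) y ≫ colimit.ι D j).app (op a) (𝟙 a)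
    erw [comp_app_elt, eltHom_id, hy]
  · -- injectivity
    intro i j ηi ηj hij
    have hij' : (colimit.ι D i).app (op a) ((ηi : Hrep A a ⟶ D.obj i).app (op a) (𝟙 a))
        = (colimit.ι D j).app (op a) ((ηj : Hrep A a ⟶ D.obj j).app (op a) (𝟙 a)) := by
      have h1 : ((ηi ≫ colimit.ι D i : Hrep A a ⟶ colimit D)).app (op a) (𝟙 a)
          = ((ηj ≫ colimit.ι D j : Hrep A a ⟶ colimit D)).app (op a) (𝟙 a) := by
        rw [show (ηi ≫ colimit.ι D i : Hrep A a ⟶ colimit D)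
          = ((coyoneda.obj (op (Hrep A a))).mapCocone (colimit.cocone D)).ι.app i ηi from rfl]
        rw [show (ηj ≫ colimit.ι D j : Hrep A a ⟶ colimit D)
          = ((coyoneda.obj (op (Hrep A a))).mapCocone (colimit.cocone D)).ι.app j ηj from rfl]
        rw [hij]
      erw [comp_app_elt, comp_app_elt] at h1
      exact h1
    obtain ⟨k, f, g, hfg⟩ := pmod_colim_rep_eq D _ _ hij'
    refine ⟨k, f, g, ?_⟩
    show ηi ≫ D.map f = ηj ≫ D.map g
    apply hrep_hom_ext
    erw [comp_app_elt, comp_app_elt]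
    exact hfg
end Fp
attribute [local instance] CategoryTheory.Abelian.hasFiniteBiproducts
section Coker
variable {A}

lemma nat_app_elt {X Y : PMod A} (p : X ⟶ Y) {c c' : Aᵒᵖ} (f : c ⟶ c') (x : X.obj c) :
    p.app c' (X.map f x) = Y.map f (p.app c x) :=
  congrArg (fun (φ : X.obj c ⟶ Y.obj c') => φ x) (p.naturality f)

lemma hmap_app_id {c a : A} (r : c ⟶ a) : (Hmap A r).app (op c) (𝟙 c) = r := by
  show 𝟙 c ≫ r = r; simp

lemma hmap_comp_eq_zero_iff {c a : A} (r : c ⟶ a) {W : PMod A} (θ : Hrep A a ⟶ W) :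
    Hmap A r ≫ θ = 0 ↔ θ.app (op c) r = 0 := by
  constructor
  · intro h0
    have h1 := congrArg (fun (φ : Hrep A c ⟶ W) => φ.app (op c) (𝟙 c)) h0
    simp only at h1
    erw [comp_app_elt, hmap_app_id] at h1
    exact h1
  · intro h0
    apply hrep_hom_ext
    erw [comp_app_elt, hmap_app_id, h0]
    rfl

variable {a : A} {ι : Type u} (z : ι → Σ c : A, (c ⟶ a)) (s : Finset ι)

def rhoS : (⨁ fun i : ↥s => Hrep A (z i.1).1) ⟶ Hrep A a :=
  biproduct.desc fun i => Hmap A (z i.1).2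

lemma rhoS_comp_eq_zero_iff {W : PMod A} (θ : Hrep A a ⟶ W) :
    rhoS z s ≫ θ = 0 ↔ ∀ i ∈ s, θ.app (op (z i).1) ((z i).2) = 0 := by
  constructor
  · intro h0 i hi
    have h1 : biproduct.ι (fun i : ↥s => Hrep A (z i.1).1) ⟨i, hi⟩ ≫ rhoS z s
        = Hmap A ((z i).2) := biproduct.ι_desc _ _
    have h2 : Hmap A ((z i).2) ≫ θ = 0 := by
      rw [← h1, Category.assoc, h0, comp_zero]
    exact (hmap_comp_eq_zero_iff _ _).mp h2
  · intro h0
    apply biproduct.hom_ext'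
    intro i
    rw [comp_zero, ← Category.assoc]
    have h1 : biproduct.ι (fun i : ↥s => Hrep A (z i.1).1) i ≫ rhoS z s
        = Hmap A ((z i.1).2) := biproduct.ι_desc _ _
    rw [h1]
    exact (hmap_comp_eq_zero_iff _ _).mpr (h0 i.1 i.2)

def XS : PMod A := cokernel (rhoS z s)

def piS : Hrep A a ⟶ XS z s := cokernel.π _

instance piS_epi : Epi (piS z s) := by unfold piS; exact coequalizer.π_epi

lemma piS_app_surjective (c : Aᵒᵖ) : Function.Surjective ((piS z s).app c) :=
  (AddCommGrpCat.epi_iff_surjective _).mp inferInstance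

lemma XS_additive : (XS z s).Additive := by
  refine additive_of_jointly_surjective (fun _ : PUnit.{u+1} => Hrep A a) (fun _ => hrep_additive a)
    (fun _ => piS z s) ?_
  intro c x
  obtain ⟨y, hy⟩ := piS_app_surjective z s c x
  exact ⟨PUnit.unit, y, hy⟩

def descS {W : PMod A} (θ : Hrep A a ⟶ W) (h0 : ∀ i ∈ s, θ.app (op (z i).1) ((z i).2) = 0) :
    XS z s ⟶ W :=
  cokernel.desc _ θ ((rhoS_comp_eq_zero_iff z s θ).mpr h0)

@[simp] lemma piS_descS {W : PMod A} (θ : Hrep A a ⟶ W)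
    (h0 : ∀ i ∈ s, θ.app (op (z i).1) ((z i).2) = 0) :
    piS z s ≫ descS z s θ h0 = θ := cokernel.π_desc _ _ _

lemma rhoS_piS : rhoS z s ≫ piS z s = 0 := cokernel.condition _

end Coker
section CokerFp
variable {A}
variable {a : A} {ι : Type u} (z : ι → Σ c : A, (c ⟶ a)) (s : Finset ι)

lemma XS_finPresented : FinPresented A (XS z s) := by
  refine ⟨XS_additive z s, ?_⟩
  intro J _ _ D hD
  have hcadd : (colimit D).Additive := pmod_colim_additive D hD
  constructor
  apply Types.FilteredColimit.isColimitOf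
  · -- surjectivity
    intro (η : XS z s ⟶ colimit D)
    set ψ : Hrep A a ⟶ colimit D := piS z s ≫ η with hψ
    obtain ⟨j, y, hy⟩ := pmod_colim_exists_rep D (op a) (ψ.app (op a) (𝟙 a))
    have hcond : ∀ i ∈ s,
        (colimit.ι D j).app (op (z i).1) ((D.obj j).map ((z i).2).op y) = 0 := by
      intro i hi
      have hψ0 : rhoS z s ≫ ψ = 0 := by
        rw [hψ, ← Category.assoc, rhoS_piS, zero_comp]
      have hz : ψ.app (op (z i).1) ((z i).2) = 0 :=
        (rhoS_comp_eq_zero_iff z s ψ).mp hψ0 i hi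
      have h1 : ψ.app (op (z i).1) ((z i).2)
          = (colimit D).map ((z i).2).op (ψ.app (op a) (𝟙 a)) := hom_app_hrep ψ _
      have h2 : (colimit.ι D j).app (op (z i).1) ((D.obj j).map ((z i).2).op y)
          = (colimit D).map ((z i).2).op ((colimit.ι D j).app (op a) y) :=
        nat_app_elt (colimit.ι D j) ((z i).2).op y
      rw [h2, hy, ← h1, hz]
    obtain ⟨k, f, hkf⟩ := pmod_colim_finset_zero D s (fun i => op (z i).1)
      (fun i => (D.obj j).map ((z i).2).op y) hcond
    set y' : (D.obj k).obj (op a) := (D.map f).app (op a) y with hy'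
    have hcond' : ∀ i ∈ s, (D.obj k).map ((z i).2).op y' = 0 := by
      intro i hi
      have h3 : (D.map f).app (op (z i).1) ((D.obj j).map ((z i).2).op y)
          = (D.obj k).map ((z i).2).op ((D.map f).app (op a) y) :=
        nat_app_elt (D.map f) ((z i).2).op y
      rw [hy', ← h3]
      exact hkf i hi
    have hθcond : ∀ i ∈ s, (eltHom (hD k) y').app (op (z i).1) ((z i).2) = 0 := by
      intro i hi
      rw [eltHom_app]
      exact hcond' i hi
    refine ⟨k, descS z s (eltHom (hD k) y') hθcond, ?_⟩
    have hkey : piS z s ≫ descS z s (eltHom (hD k) y') hθcond ≫ colimit.ι D k = ψ := by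
      rw [← Category.assoc, piS_descS]
      apply hrep_hom_ext
      erw [comp_app_elt, eltHom_id]
      have hw := congrArg (fun (φ : D.obj j ⟶ colimit D) => φ.app (op a) y) (colimit.w D f)
      simp only at hw
      rw [hy', show (colimit.ι D k).app (op a) ((D.map f).app (op a) y)
        = ((D.map f ≫ colimit.ι D k).app (op a)) y from rfl, hw, hy]
    have := (cancel_epi (piS z s)).mp hkey
    show η = descS z s (eltHom (hD k) y') hθcond ≫ colimit.ι D k
    exact this.symm
  · -- injectivity
    intro i j ηi ηj hij
    have hij2 : (ηi : XS z s ⟶ D.obj i) ≫ colimit.ι D i = ηj ≫ colimit.ι D j := hij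
    set ψi : Hrep A a ⟶ D.obj i := piS z s ≫ ηi
    set ψj : Hrep A a ⟶ D.obj j := piS z s ≫ ηj
    have hvals : (colimit.ι D i).app (op a) (ψi.app (op a) (𝟙 a))
        = (colimit.ι D j).app (op a) (ψj.app (op a) (𝟙 a)) := by
      have h1 := congrArg (fun (φ : XS z s ⟶ colimit D) =>
        φ.app (op a) ((piS z s).app (op a) (𝟙 a))) hij2
      simp only at h1
      exact h1
    obtain ⟨k, f, g, hfg⟩ := pmod_colim_rep_eq D _ _ hvals
    refine ⟨k, f, g, ?_⟩
    show ηi ≫ D.map f = ηj ≫ D.map g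
    apply (cancel_epi (piS z s)).mp
    rw [← Category.assoc, ← Category.assoc]
    apply hrep_hom_ext
    erw [comp_app_elt, comp_app_elt]
    exact hfg
end CokerFp
section TmapG
variable {A}
variable {a : A} {ι : Type u} (z : ι → Σ c : A, (c ⟶ a))

lemma piS_app_z_zero (s : Finset ι) {i : ι} (hi : i ∈ s) :
    (piS z s).app (op (z i).1) ((z i).2) = 0 := by
  have h1 : biproduct.ι (fun i : ↥s => Hrep A (z i.1).1) ⟨i, hi⟩ ≫ rhoS z s
      = Hmap A ((z i).2) := biproduct.ι_desc _ _
  have h2 : Hmap A ((z i).2) ≫ piS z s = 0 := by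
    rw [← h1, Category.assoc, rhoS_piS, comp_zero]
  exact (hmap_comp_eq_zero_iff _ _).mp h2

def tmap {s s' : Finset ι} (h : s ≤ s') : XS z s ⟶ XS z s' :=
  descS z s (piS z s') (fun i hi => piS_app_z_zero z s' (h hi))

@[simp] lemma piS_tmap {s s' : Finset ι} (h : s ≤ s') :
    piS z s ≫ tmap z h = piS z s' := piS_descS _ _ _ _

lemma tmap_id (s : Finset ι) : tmap z (le_refl s) = 𝟙 (XS z s) := by
  rw [← cancel_epi (piS z s), piS_tmap, Category.comp_id]

lemma tmap_comp {s s' s'' : Finset ι} (h : s ≤ s') (h' : s' ≤ s'') :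
    tmap z h ≫ tmap z h' = tmap z (le_trans h h') := by
  rw [← cancel_epi (piS z s), ← Category.assoc, piS_tmap, piS_tmap, piS_tmap]

variable (Z : Finset ι → PMod A) (p : ∀ s, XS z s ⟶ Z s) (hepi : ∀ s, Epi (p s))
variable (hzero : ∀ (s s' : Finset ι) (h : s ≤ s'),
    kernel.ι (p s) ≫ tmap z h ≫ p s' = 0)

def GFun : Finset ι ⥤ PMod A where
  obj := Z
  map {s s'} f :=
    haveI := hepi s
    Abelian.epiDesc (p s) (tmap z (leOfHom f) ≫ p s') (hzero s s' (leOfHom f))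
  map_id s := by
    haveI := hepi s
    rw [← cancel_epi (p s), Abelian.comp_epiDesc, tmap_id, Category.id_comp, Category.comp_id]
  map_comp {s s' s''} f g := by
    haveI := hepi s
    haveI := hepi s'
    rw [← cancel_epi (p s), Abelian.comp_epiDesc, ← Category.assoc, Abelian.comp_epiDesc,
      Category.assoc, Abelian.comp_epiDesc, ← Category.assoc, tmap_comp]

lemma p_GFun_map {s s' : Finset ι} (f : s ⟶ s') :
    p s ≫ (GFun z Z p hepi hzero).map f = tmap z (leOfHom f) ≫ p s' := by
  haveI := hepi s
  exact Abelian.comp_epiDesc _ _ _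

end TmapG
section Helper
variable {A}
lemma zero_app_elt {X Y : PMod A} (c : Aᵒᵖ) (x : X.obj c) : (0 : X ⟶ Y).app c x = 0 := by
  simp
end Helper

theorem statement7 (T F : Set (PMod A)) (h : IsTorsionPair A T F)
    (hher : ∀ (S X : PMod A) (f : S ⟶ X), Mono f → X ∈ T → S ∈ T) :
    ClosedUnderDirectLimits A F ↔
      ∃ S : Set (PMod A), (∀ M ∈ S, FinPresented A M) ∧
        F = {X | X.Additive ∧ ∀ M ∈ S, ∀ f : M ⟶ X, f = 0} := by
  obtain ⟨hT, hF, hseq⟩ := h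
  constructor
  · intro hcl
    refine ⟨{M : PMod A | FinPresented A M ∧ M ∈ T}, fun M hM => hM.1, ?_⟩
    apply Set.eq_of_subset_of_subset
    · intro X hXF
      rw [hF] at hXF
      exact ⟨hXF.1, fun M hM f => hXF.2 M hM.2 f⟩
    · rintro X ⟨hXadd, hXkill⟩
      rw [hF]
      refine ⟨hXadd, ?_⟩
      intro Y hYT f
      have hY : Y.Additive ∧ ∀ W ∈ F, ∀ g : Y ⟶ W, g = 0 := by rw [hT] at hYT; exact hYT
      ext c x
      obtain ⟨a⟩ := c
      suffices hfx : f.app (op a) x = 0 by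
        rw [hfx, zero_app_elt]
      haveI : DecidableEq {e : Σ c : A, (c ⟶ a) // Y.map e.2.op x = 0} := Classical.decEq _
      set Ker := {e : Σ c : A, (c ⟶ a) // Y.map e.2.op x = 0} with hKer
      let z : Ker → Σ c : A, (c ⟶ a) := Subtype.val
      set φ : Hrep A a ⟶ Y := eltHom hY.1 x with hφdef
      -- torsion-free quotients of the finite-stage quotients
      have hc := fun (s : Finset Ker) => hseq (XS z s) (XS_additive z s)
      choose Z p hZF hpepi hker using hc
      have hzero : ∀ (s s' : Finset Ker) (hss' : s ≤ s'),
          kernel.ι (p s) ≫ tmap z hss' ≫ p s' = 0 := by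
        intro s s' hss'
        have hks := hker s
        rw [hT] at hks
        exact hks.2 (Z s') (hZF s') _
      set G : Finset Ker ⥤ PMod A := GFun z Z p hpepi hzero with hG
      have hGobj : ∀ s, G.obj s = Z s := fun s => rfl
      have hCF : colimit G ∈ F := hcl (Finset Ker) G (fun s => hZF s)
      have hθ : ∀ s : Finset Ker,
          piS z (∅ : Finset Ker) ≫ p ∅ ≫ colimit.ι G ∅
            = piS z s ≫ p s ≫ colimit.ι G s := by
        intro s
        have hle : (∅ : Finset Ker) ≤ s := Finset.empty_subset s
        have hw := colimit.w G (homOfLE hle)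
        have hmap : p ∅ ≫ G.map (homOfLE hle) = tmap z (leOfHom (homOfLE hle)) ≫ p s :=
          p_GFun_map z Z p hpepi hzero (homOfLE hle)
        calc piS z ∅ ≫ p ∅ ≫ colimit.ι G ∅
            = piS z ∅ ≫ p ∅ ≫ G.map (homOfLE hle) ≫ colimit.ι G s := by erw [hw]
          _ = piS z ∅ ≫ (p ∅ ≫ G.map (homOfLE hle)) ≫ colimit.ι G s := by
              exact congrArg (fun t => piS z ∅ ≫ t) (Category.assoc _ _ _).symm
          _ = piS z ∅ ≫ (tmap z (leOfHom (homOfLE hle)) ≫ p s) ≫ colimit.ι G s := by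
              rw [hmap]; rfl
          _ = (piS z ∅ ≫ tmap z (leOfHom (homOfLE hle))) ≫ p s ≫ colimit.ι G s := by
              exact (congrArg (fun t => piS z ∅ ≫ t) (Category.assoc _ _ _)).trans (Category.assoc _ _ _).symm
          _ = piS z s ≫ p s ≫ colimit.ι G s := by rw [piS_tmap]
      set h' : Hrep A a ⟶ colimit G := piS z ∅ ≫ p ∅ ≫ colimit.ι G ∅ with hh'
      set e := factorThruImage φ with he
      have himT : image φ ∈ T := hher (image φ) Y (image.ι φ) inferInstance hYT
      have hker0 : kernel.ι e ≫ h' = 0 := by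
        ext c w
        obtain ⟨c₀⟩ := c
        have hφg : φ.app (op c₀) ((kernel.ι e).app (op c₀) w) = 0 := by
          have h1 : kernel.ι e ≫ φ = 0 := by
            have h1a : kernel.ι e ≫ e = 0 := kernel.condition e
            have h1b : (kernel.ι e ≫ e) ≫ image.ι φ = 0 := by rw [h1a, zero_comp]
            rw [Category.assoc, he, image.fac φ] at h1b
            rw [he]
            exact h1b
          have h2 := congrArg (fun (ρ : kernel e ⟶ Y) => ρ.app (op c₀) w) h1
          simp only at h2
          rw [comp_app_elt, zero_app_elt] at h2
          exact h2
        have hYg : Y.map ((kernel.ι e).app (op c₀) w).op x = 0 := by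
          have h3 := eltHom_app hY.1 x ((kernel.ι e).app (op c₀) w)
          rw [← hφdef] at h3
          rw [← h3]; exact hφg
        have hh'g : h'.app (op c₀) ((kernel.ι e).app (op c₀) w) = 0 := by
          have hpi0 : (piS z ({⟨⟨c₀, (kernel.ι e).app (op c₀) w⟩, hYg⟩} : Finset Ker)).app
              (op c₀) ((kernel.ι e).app (op c₀) w) = 0 :=
            piS_app_z_zero z _ (Finset.mem_singleton_self _)
          rw [hθ ({⟨⟨c₀, (kernel.ι e).app (op c₀) w⟩, hYg⟩} : Finset Ker)]
          rw [comp_app_elt, hpi0, map_zero]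
        show (kernel.ι e ≫ h').app (op c₀) w = (0 : kernel e ⟶ colimit G).app (op c₀) w
        rw [comp_app_elt, hh'g, zero_app_elt]
      set q := Abelian.epiDesc e h' hker0 with hqdef
      have hq0 : q = 0 := by
        rw [hT] at himT
        exact himT.2 (colimit G) hCF q
      have hh'0 : h' = 0 := by
        rw [← Abelian.comp_epiDesc e h' hker0, ← hqdef, hq0, comp_zero]
      have hv : (colimit.ι G ∅).app (op a)
          ((p ∅).app (op a) ((piS z ∅).app (op a) (𝟙 a))) = 0 := by
        have h4 := congrArg (fun (ρ : Hrep A a ⟶ colimit G) => ρ.app (op a) (𝟙 a)) hh'0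
        simp only at h4
        rw [hh'] at h4
        erw [comp_app_elt, comp_app_elt, zero_app_elt] at h4
        exact h4
      obtain ⟨k, fk, hfk⟩ := pmod_colim_rep_zero G _ hv
      have hcomp : piS z ∅ ≫ p ∅ ≫ G.map fk = piS z k ≫ p k := by
        have hm : p ∅ ≫ G.map fk = tmap z (leOfHom fk) ≫ p k :=
          p_GFun_map z Z p hpepi hzero fk
        rw [hm]; exact (Category.assoc _ _ _).symm.trans (congrArg (· ≫ p k) (piS_tmap z _))
      have hψ0 : (piS z k ≫ p k).app (op a) (𝟙 a) = 0 := by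
        erw [← hcomp, comp_app_elt, comp_app_elt]
        exact hfk
      haveI := hpepi k
      have hψzero : piS z k ≫ p k = 0 := by
        apply hrep_hom_ext
        erw [hψ0, zero_app_elt]
      have hidZ : 𝟙 (Z k) = (0 : Z k ⟶ Z k) := by
        haveI : Epi (piS z k ≫ p k) := epi_comp _ _
        apply (cancel_epi (piS z k ≫ p k)).mp
        rw [hψzero, zero_comp, zero_comp]
      have hpk0 : p k = 0 := by
        rw [← Category.comp_id (p k), hidZ, comp_zero]
      have hXkT : XS z k ∈ T := by
        rw [hT]
        refine ⟨XS_additive z k, ?_⟩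
        intro W hWF u
        have hkk := hker k
        rw [hT] at hkk
        have hiu : kernel.ι (p k) ≫ u = 0 := hkk.2 W hWF _
        have hcond : 𝟙 (XS z k) ≫ p k = 0 := by rw [Category.id_comp, hpk0]
        have hl : kernel.lift (p k) (𝟙 (XS z k)) hcond ≫ kernel.ι (p k) = 𝟙 (XS z k) :=
          kernel.lift_ι _ _ _
        calc u = (kernel.lift (p k) (𝟙 (XS z k)) hcond ≫ kernel.ι (p k)) ≫ u := by
              rw [hl, Category.id_comp]
          _ = kernel.lift (p k) (𝟙 (XS z k)) hcond ≫ (kernel.ι (p k) ≫ u) := by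
              rw [Category.assoc]
          _ = 0 := by rw [hiu, comp_zero]
      set χ : Hrep A a ⟶ X := φ ≫ f with hχ
      have hχker : ∀ i ∈ (k : Finset Ker), χ.app (op (z i).1) ((z i).2) = 0 := by
        intro i _
        erw [hχ, comp_app_elt]
        have h5 : φ.app (op (z i).1) ((z i).2) = 0 := by
          rw [hφdef, eltHom_app]
          exact i.2
        rw [h5, map_zero]
      have hd : piS z k ≫ descS z k χ hχker = χ := piS_descS _ _ _ _
      have hd0 : descS z k χ hχker = 0 := hXkill (XS z k) ⟨XS_finPresented z k, hXkT⟩ _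
      have hχ0 : χ = 0 := by rw [← hd, hd0, comp_zero]
      have h6 := congrArg (fun (ρ : Hrep A a ⟶ X) => ρ.app (op a) (𝟙 a)) hχ0
      simp only at h6
      erw [hχ, comp_app_elt, hφdef, eltHom_id, zero_app_elt] at h6
      exact h6
  · rintro ⟨S, hSfp, hFS⟩
    intro J _ _ D hD
    have hDadd : ∀ j, (D.obj j).Additive := by
      intro j
      have h7 := hD j; rw [hFS] at h7; exact h7.1
    rw [hFS]
    refine ⟨pmod_colim_additive D hDadd, ?_⟩
    intro M hM f
    obtain ⟨hMadd, hMfp⟩ := hSfp M hM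
    obtain ⟨hcol⟩ := hMfp J D hDadd
    obtain ⟨j, g, hg⟩ := Types.jointly_surjective _ hcol f
    have hfg : ((show M ⟶ D.obj j from g) ≫ colimit.ι D j) = f := hg
    have hgz : (show M ⟶ D.obj j from g) = 0 := by
      have h8 := hD j; rw [hFS] at h8
      exact h8.2 M hM _
    rw [← hfg, hgz, zero_comp]
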